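/- (Duflo–Vergne) Let q be a finite-dimensional Lie algebra over a field k of characteristic 0 and let w ∈ q* be a regular linear form, i.e. dim q_w = ind q. Then the stabilizer q_w is an abelian Lie subalgebra of q. -/

import Mathlib

open Module

section Defs

variable (k : Type*) [Field k]

/-- The stabiliser `q_ξ = {x ∈ q | ξ ⁅x, y⁆ = 0 for all y}` of a linear form `ξ ∈ q*`. -/
def lieStab (q : Type*) [LieRing q] [LieAlgebra k q] (ξ : Module.Dual k q) :
    Submodule k q where
  carrier := {x : q | ∀ y : q, ξ ⁅x, y⁆ = 0}
  add_mem' := by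
    intro a b ha hb y
    rw [add_lie, map_add, ha y, hb y, add_zero]
  zero_mem' := by
    intro y
    rw [zero_lie, map_zero]
  smul_mem' := by
    intro c a ha y
    rw [smul_lie, map_smul, ha y, smul_zero]

/-- The index of a Lie algebra: the minimal dimension of the stabiliser of a linear form. -/
noncomputable def lieIndex (q : Type*) [LieRing q] [LieAlgebra k q] : ℕ :=
  ⨅ ξ : Module.Dual k q, Module.finrank k ↥(lieStab k q ξ)

end Defs


open Polynomial

set_option maxHeartbeats 400000 in
lemma dufloVergne_key {k V : Type*} [Field k] [Infinite k] [AddCommGroup V] [Module k V]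
    [FiniteDimensional k V] (B C : V →ₗ[k] V →ₗ[k] k)
    (hB : ∀ a c : V, B a c = - B c a)
    (hrank : ∀ t : k, Module.finrank k (LinearMap.ker B) ≤
      Module.finrank k (LinearMap.ker (B + t • C)))
    {x y : V} (hx : B x = 0) (hy : B y = 0) : C x y = 0 := by
  classical
  obtain ⟨W, hW⟩ := Submodule.exists_isCompl (LinearMap.ker B)
  set K := LinearMap.ker B with hK
  set m := finrank k ↥W with hm
  let b : Basis (Fin m) k ↥W := Module.finBasis k ↥W
  set A0 : Matrix (Fin m) (Fin m) k := Matrix.of fun i j => B (b i) (b j) with hA0def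
  set A1 : Matrix (Fin m) (Fin m) k := Matrix.of fun i j => C (b i) (b j) with hA1def
  -- A0 is nondegenerate
  have hBW : ∀ z : V, (∀ j, B z (b j) = 0) → (∀ u : ↥W, B z (u : V) = 0) := by
    intro z hz u
    have h0 : (B z).comp W.subtype = 0 := b.ext fun j => by simpa using hz j
    simpa using LinearMap.congr_fun h0 u
  have hA0det : A0.det ≠ 0 := by
    rw [← Matrix.separatingLeft_iff_det_ne_zero, Matrix.separatingLeft_def]
    intro v hv
    have hvj : ∀ j, (∑ i, v i * A0 i j) = 0 := by
      intro j
      have h := hv (Pi.single j 1)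
      rw [Matrix.dotProduct_mulVec] at h
      simpa [Matrix.vecMul, dotProduct, Pi.single_apply, mul_ite,
        Finset.sum_ite_eq'] using h
    set z : ↥W := ∑ i, v i • b i with hzdef
    have hzj : ∀ j, B (z : V) (b j) = 0 := by
      intro j
      have hz : B (z : V) (b j) = ∑ i, v i * A0 i j := by
        simp [hzdef, hA0def]
      rw [hz, hvj]
    have hzK : (z : V) ∈ K := by
      rw [hK, LinearMap.mem_ker]
      ext u
      have hsup : K ⊔ W = ⊤ := hW.sup_eq_top
      obtain ⟨a, ha, c, hc, rfl⟩ := Submodule.mem_sup.mp (hsup ▸ Submodule.mem_top (x := u))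
      have h1 : B (z : V) a = 0 := by
        rw [hB]
        have ha0 : B a = 0 := LinearMap.mem_ker.mp ha
        rw [ha0]; simp
      have h2 : B (z : V) c = 0 := hBW (z : V) hzj ⟨c, hc⟩
      simp [h1, h2]
    have hz0 : z = 0 := by
      have hmem : (z : V) ∈ K ⊓ W := ⟨hzK, z.2⟩
      rw [hW.inf_eq_bot] at hmem
      exact Subtype.ext (by simpa using hmem)
    have hv0 : ∀ i, v i = 0 :=
      Fintype.linearIndependent_iff.mp b.linearIndependent v (by rw [← hzdef]; exact hz0)
    funext i; exact hv0 i
  -- polynomial matrix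
  set Ab : Matrix (Fin m) (Fin m) k[X] :=
    A0.map Polynomial.C + (X : k[X]) • A1.map Polynomial.C with hAb
  set d : k[X] := Ab.det with hd
  have hAbeval : ∀ t : k, ∀ i j, eval t (Ab i j) = A0 i j + t * A1 i j := by
    intro t i j; simp [hAb]; ring
  have hdeval : ∀ t : k, eval t d = (A0 + t • A1).det := by
    intro t
    have h1 : (evalRingHom t) d = ((evalRingHom t).mapMatrix Ab).det := RingHom.map_det _ _
    have h2 : (evalRingHom t).mapMatrix Ab = A0 + t • A1 := by
      ext i j
      simpa using hAbeval t i j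
    simpa [h2] using h1
  have hd0 : eval 0 d = A0.det := by
    rw [hdeval 0]; simp
  have hdne : d ≠ 0 := by
    intro h
    rw [h] at hd0
    exact hA0det (by simpa using hd0.symm)
  -- solution vector (polynomial coordinates via adjugate)
  set p : Fin m → k[X] := fun i => -∑ l, Polynomial.C (C x (b l)) * Ab.adjugate l i with hp
  have hpA : ∀ j, (∑ i, p i * Ab i j) = -(Polynomial.C (C x (b j)) * d) := by
    intro j
    have hadj : ∀ l, (∑ i, Ab.adjugate l i * Ab i j) = d * (if l = j then 1 else 0) := by
      intro l
      have h := congrArg (fun M : Matrix (Fin m) (Fin m) k[X] => M l j) (Matrix.adjugate_mul Ab)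
      simpa [Matrix.mul_apply, Matrix.one_apply] using h
    have hstep : (∑ i, (∑ l, Polynomial.C (C x (b l)) * Ab.adjugate l i) * Ab i j)
        = ∑ l, Polynomial.C (C x (b l)) * (∑ i, Ab.adjugate l i * Ab i j) := by
      simp_rw [Finset.sum_mul, Finset.mul_sum, mul_assoc]
      exact Finset.sum_comm
    calc (∑ i, p i * Ab i j)
        = -(∑ i, (∑ l, Polynomial.C (C x (b l)) * Ab.adjugate l i) * Ab i j) := by
          rw [← Finset.sum_neg_distrib]
          exact Finset.sum_congr rfl fun i _ => by rw [hp, neg_mul]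
      _ = -(∑ l, Polynomial.C (C x (b l)) * (∑ i, Ab.adjugate l i * Ab i j)) := by rw [hstep]
      _ = -(∑ l, Polynomial.C (C x (b l)) * (d * (if l = j then 1 else 0))) := by
          refine congrArg Neg.neg (Finset.sum_congr rfl fun l _ => ?_)
          rw [hadj l]
      _ = -(Polynomial.C (C x (b j)) * d) := by
          simp only [mul_ite, mul_one, mul_zero, Finset.sum_ite_eq', Finset.mem_univ, if_true]
  set P : k[X] := ∑ i, p i * Polynomial.C (C (b i) y) with hP
  have main : ∀ t : k, t ≠ 0 → eval t d ≠ 0 →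
      eval t d * C x y + t * eval t P = 0 := by
    intro t ht0 htd
    set D := B + t • C with hD
    have hDapp : ∀ u v : V, D u v = B u v + t * C u v := by
      intro u v; rw [hD]; simp
    set wv : V := (eval t d)⁻¹ • ∑ i, eval t (p i) • (b i : V) with hwv
    set vt : V := x + t • wv with hvt
    have hBwv : ∀ u : V, B wv u = (eval t d)⁻¹ * ∑ i, eval t (p i) * B (b i) u := by
      intro u
      rw [hwv]
      simp [Finset.mul_sum]
    have hCwv : ∀ u : V, C wv u = (eval t d)⁻¹ * ∑ i, eval t (p i) * C (b i) u := by
      intro u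
      rw [hwv]
      simp [Finset.mul_sum]
    -- Step A : vt kills W
    have hvtj : ∀ j, D vt (b j) = 0 := by
      intro j
      have hsum : (∑ i, eval t (p i) * B (b i) (b j)) + t * (∑ i, eval t (p i) * C (b i) (b j))
          = eval t (∑ i, p i * Ab i j) := by
        rw [Finset.mul_sum, ← Finset.sum_add_distrib, eval_finset_sum]
        refine Finset.sum_congr rfl fun i _ => ?_
        rw [eval_mul, hAbeval t i j, hA0def, hA1def]
        simp only [Matrix.of_apply]
        ring
      have hDwv : D wv (b j) = - C x (b j) := by
        rw [hDapp, hBwv, hCwv]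
        have : (eval t d)⁻¹ * (∑ i, eval t (p i) * B (b i) (b j))
            + t * ((eval t d)⁻¹ * (∑ i, eval t (p i) * C (b i) (b j)))
            = (eval t d)⁻¹ * ((∑ i, eval t (p i) * B (b i) (b j))
              + t * (∑ i, eval t (p i) * C (b i) (b j))) := by ring
        rw [this, hsum, hpA j, eval_neg, eval_mul, eval_C]
        field_simp
      have hx' : B x (b j) = 0 := by rw [hx]; rfl
      have : D vt (b j) = D x (b j) + t * D wv (b j) := by
        rw [hvt]; simp
      rw [this, hDwv, hDapp, hx']
      ring
    -- Step B : vt is in the kernel of D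
    set Φ := D.compl₂ W.subtype with hΦ
    have hψinj : Function.Injective ⇑(Φ ∘ₗ W.subtype) := by
      rw [← LinearMap.ker_eq_bot, Submodule.eq_bot_iff]
      intro u hu
      set g : Fin m → k := b.equivFun u with hg
      have hu' : (u : V) = ∑ i, g i • (b i : V) := by
        conv_lhs => rw [← b.sum_equivFun u]
        simp only [hg, Basis.equivFun_apply, Submodule.coe_sum, Submodule.coe_smul]
      have hgA : ∀ j, (∑ i, g i * (A0 i j + t * A1 i j)) = 0 := by
        intro j
        have h1 : D (u : V) (b j) = 0 := by
          have h2 := LinearMap.congr_fun (LinearMap.mem_ker.mp hu) (b j)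
          simpa [hΦ, LinearMap.compl₂_apply] using h2
        rw [hu'] at h1
        rw [← h1]
        simp only [map_sum, map_smul, LinearMap.sum_apply, LinearMap.smul_apply, smul_eq_mul]
        refine Finset.sum_congr rfl fun i _ => ?_
        rw [hDapp, hA0def, hA1def]
        simp only [Matrix.of_apply]
      have hgnd : g = 0 := by
        have hdet : (A0 + t • A1).det ≠ 0 := by rw [← hdeval t]; exact htd
        have hsl : (A0 + t • A1).SeparatingLeft := Matrix.separatingLeft_iff_det_ne_zero.mpr hdet
        rw [Matrix.separatingLeft_def] at hsl
        refine hsl g fun wvec => ?_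
        rw [Matrix.dotProduct_mulVec]
        have hvm : Matrix.vecMul g (A0 + t • A1) = 0 := by
          funext j
          have := hgA j
          simpa [Matrix.vecMul, dotProduct, Matrix.add_apply, Matrix.smul_apply,
            smul_eq_mul] using this
        rw [hvm, zero_dotProduct]
      exact b.equivFun.map_eq_zero_iff.mp (hg ▸ hgnd)
    have hψsurj : Function.Surjective ⇑(Φ ∘ₗ W.subtype) :=
      (LinearMap.injective_iff_surjective_of_finrank_eq_finrank
        (Subspace.dual_finrank_eq (V := ↥W)).symm).mp hψinj
    have hΦsurj : Function.Surjective ⇑Φ := by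
      intro φ
      obtain ⟨u, hu⟩ := hψsurj φ
      exact ⟨(u : V), hu⟩
    have hkerΦ : finrank k ↥(LinearMap.ker Φ) = finrank k ↥K := by
      have h1 := LinearMap.finrank_range_add_finrank_ker Φ
      have h2 : LinearMap.range Φ = ⊤ := LinearMap.range_eq_top.mpr hΦsurj
      rw [h2, finrank_top] at h1
      have h3 := Submodule.finrank_add_eq_of_isCompl hW
      have h4 : finrank k (↥W →ₗ[k] k) = finrank k ↥W := Subspace.dual_finrank_eq
      omega
    have hkerD : LinearMap.ker D = LinearMap.ker Φ := by
      refine Submodule.eq_of_le_of_finrank_le (fun v hv => ?_) ?_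
      · rw [LinearMap.mem_ker] at hv ⊢
        ext u
        simp [hΦ, LinearMap.compl₂_apply, hv]
      · rw [hkerΦ]
        have := hrank t
        rw [← hD] at this
        exact this
    have hvtker : D vt = 0 := by
      have hΦvt : Φ vt = 0 := b.ext fun j => by
        simpa [hΦ, LinearMap.compl₂_apply] using hvtj j
      have : vt ∈ LinearMap.ker D := by
        rw [hkerD]; exact LinearMap.mem_ker.mpr hΦvt
      exact LinearMap.mem_ker.mp this
    -- final computation
    have h0 : D vt y = 0 := by rw [hvtker]; rfl
    have hBxy : B x y = 0 := by rw [hx]; rfl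
    have hBwy : B wv y = 0 := by rw [hB wv y, hy]; simp
    have hPeval : eval t P = ∑ i, eval t (p i) * C (b i) y := by
      rw [hP, eval_finset_sum]
      exact Finset.sum_congr rfl fun i _ => by rw [eval_mul, eval_C]
    have hCwy : C wv y = (eval t d)⁻¹ * eval t P := by
      rw [hCwv y, hPeval]
    have hexp : D vt y = t * (C x y + t * ((eval t d)⁻¹ * eval t P)) := by
      have h1 : D vt y = D x y + t * D wv y := by rw [hvt]; simp
      rw [h1, hDapp, hDapp, hBxy, hBwy, hCwy]
      ring
    rw [hexp] at h0
    have h2 : C x y + t * ((eval t d)⁻¹ * eval t P) = 0 := by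
      rcases mul_eq_zero.mp h0 with h | h
      · exact absurd h ht0
      · exact h
    field_simp at h2
    linear_combination h2
  -- polynomial identity and conclusion
  set Q : k[X] := Polynomial.C (C x y) * d + X * P with hQdef
  have hQeval : ∀ t : k, eval t (Q * (X * d)) = 0 := by
    intro t
    rcases eq_or_ne t 0 with rfl | ht0
    · simp
    rcases eq_or_ne (eval t d) 0 with htd | htd
    · simp [htd]
    · have h := main t ht0 htd
      have hq : eval t Q = 0 := by
        rw [hQdef]
        simp only [eval_add, eval_mul, eval_C, eval_X]
        linear_combination h
      simp [hq]
  have hQ0 : Q = 0 := by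
    have h := Polynomial.zero_of_eval_zero _ hQeval
    rcases mul_eq_zero.mp h with h1 | h1
    · exact h1
    · exact absurd h1 (mul_ne_zero Polynomial.X_ne_zero hdne)
  have hfin : C x y * eval 0 d = 0 := by
    have h := congrArg (eval 0) hQ0
    rw [hQdef] at h
    simpa using h
  rcases mul_eq_zero.mp hfin with h | h
  · exact h
  · rw [hd0] at h
    exact absurd h hA0det

/-- (Duflo–Vergne) If `w ∈ q*` is a regular linear form, i.e. `dim q_w = ind q`, then the
stabiliser `q_w` is an abelian Lie subalgebra of `q`. -/
theorem lieStab_abelian_of_regular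
    (k : Type*) [Field k] [CharZero k]
    (q : Type*) [LieRing q] [LieAlgebra k q] [FiniteDimensional k q]
    (w : Module.Dual k q)
    (hreg : Module.finrank k ↥(lieStab k q w) = lieIndex k q) :
    ∀ x ∈ lieStab k q w, ∀ y ∈ lieStab k q w, ⁅x, y⁆ = 0 := by
  intro x hx y hy
  have hxs : ∀ z : q, w ⁅x, z⁆ = 0 := hx
  have hys : ∀ z : q, w ⁅y, z⁆ = 0 := hy
  have hinf : ∀ ξ : Module.Dual k q,
      Module.finrank k ↥(lieStab k q w) ≤ Module.finrank k ↥(lieStab k q ξ) := by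
    intro ξ
    rw [hreg]
    have : lieIndex k q ≤ Module.finrank k ↥(lieStab k q ξ) := by
      unfold lieIndex
      exact ciInf_le (OrderBot.bddBelow _) ξ
    exact this
  let Bf : Module.Dual k q → (q →ₗ[k] q →ₗ[k] k) := fun ξ =>
    LinearMap.mk₂ k (fun a c => ξ ⁅a, c⁆)
      (fun a a' c => by simp [add_lie])
      (fun r a c => by simp [smul_lie])
      (fun a c c' => by simp [lie_add])
      (fun r a c => by simp [lie_smul])
  have hker : ∀ ξ, lieStab k q ξ = LinearMap.ker (Bf ξ) := by
    intro ξ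
    ext a
    constructor
    · intro ha
      rw [LinearMap.mem_ker]
      ext c
      exact ha c
    · intro ha c
      exact LinearMap.congr_fun (LinearMap.mem_ker.mp ha) c
  suffices h : ∀ ξ : Module.Dual k q, ξ ⁅x, y⁆ = 0 by
    exact (Module.forall_dual_apply_eq_zero_iff k _).mp h
  intro ξ
  have hskew : ∀ a c : q, (Bf w) a c = -(Bf w) c a := by
    intro a c
    show w ⁅a, c⁆ = - w ⁅c, a⁆
    rw [← lie_skew, map_neg]
  have hrank : ∀ t : k, Module.finrank k ↥(LinearMap.ker (Bf w)) ≤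
      Module.finrank k ↥(LinearMap.ker (Bf w + t • Bf ξ)) := by
    intro t
    have he : Bf w + t • Bf ξ = Bf (w + t • ξ) := by
      ext a c
      show w ⁅a, c⁆ + t • ξ ⁅a, c⁆ = (w + t • ξ) ⁅a, c⁆
      simp
    rw [he, ← hker, ← hker]
    exact hinf _
  have hx0 : (Bf w) x = 0 := by ext c; exact hxs c
  have hy0 : (Bf w) y = 0 := by ext c; exact hys c
  exact dufloVergne_key (Bf w) (Bf ξ) hskew hrank hx0 hy0
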